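/- Let n and k be natural numbers, let μ be a Borel probability measure on (Fin n → ℝ), let f : (Fin n → ℝ) → ℝ be measurable, and let ε ∈ [0,∞]. Suppose that for every k-junta g : (Fin n → ℝ) → ℝ, the lower Lebesgue integral ∫⁻ |f(y) − g(y)| dμ(y) is at least ε (i.e., f is ε-far in ℓ₁-distance from every k-junta). Then for every set S ⊆ Fin n with |S| ≤ k, the influence of the complement satisfies Infl_f(Fin n ∖ S) = ∫⁻∫⁻ |f(y) − f(x_{S̄} y_S)| dμ(x) dμ(y) ≥ ε, where x_{S̄} y_S denotes the vector whose i-th coordinate is y_i if i ∈ S and x_i otherwise. -/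

import Mathlib

open MeasureTheory ENNReal

/-- `g : ℝⁿ → ℝ` is a `k`-junta if its value depends on at most `k` coordinates. -/
def IsJunta (n k : ℕ) (g : (Fin n → ℝ) → ℝ) : Prop :=
  ∃ S : Finset (Fin n), S.card ≤ k ∧
    ∀ y z : Fin n → ℝ, (∀ i ∈ S, y i = z i) → g y = g z

open Classical in
/-- The influence of `f` over a set `T` of coordinates, w.r.t. the measure `μ`:
`Infl_f(T) = ∫⁻∫⁻ |f(y) − f(x_T y_{T̄})| dμ(x) dμ(y)`, where `x_T y_{T̄}` takes the
`x`-coordinate on `T` and the `y`-coordinate elsewhere. -/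
noncomputable def influence {n : ℕ} (μ : Measure (Fin n → ℝ))
    (f : (Fin n → ℝ) → ℝ) (T : Set (Fin n)) : ℝ≥0∞ :=
  ∫⁻ y, ∫⁻ x, ENNReal.ofReal |f y - f (fun i => if i ∈ T then x i else y i)| ∂μ ∂μ

/-- if `f` is `ε`-far in `ℓ₁`-distance from every `k`-junta, then for
every set `S` of at most `k` coordinates, the influence of the complement of `S` is
at least `ε`. -/
theorem stmt_15 (n k : ℕ) (μ : Measure (Fin n → ℝ)) [IsProbabilityMeasure μ]
    (f : (Fin n → ℝ) → ℝ) (hf : Measurable f) (ε : ℝ≥0∞)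
    (hfar : ∀ g : (Fin n → ℝ) → ℝ, IsJunta n k g →
      ε ≤ ∫⁻ y, ENNReal.ofReal |f y - g y| ∂μ) :
    ∀ S : Finset (Fin n), S.card ≤ k →
      ε ≤ influence μ f {i | i ∉ S} := by
  intro S hS
  set T : Set (Fin n) := {i | i ∉ S} with hT
  set F : (Fin n → ℝ) → (Fin n → ℝ) → ℝ≥0∞ := fun y x =>
    ENNReal.ofReal |f y - f (fun i => @ite _ (i ∈ T) (Classical.propDecidable _) (x i) (y i))|
    with hF
  have hmeas : Measurable (Function.uncurry F) := by
    apply ENNReal.measurable_ofReal.comp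
    apply Measurable.abs
    apply Measurable.sub
    · exact hf.comp measurable_fst
    · apply hf.comp
      apply measurable_pi_lambda
      intro i
      by_cases hi : i ∈ T
      · simpa [hi, Function.comp_def] using (measurable_pi_apply i).comp measurable_snd
      · simpa [hi, Function.comp_def] using (measurable_pi_apply i).comp measurable_fst
  have hswap : influence μ f T = ∫⁻ x, ∫⁻ y, F y x ∂μ ∂μ := by
    unfold influence
    exact lintegral_lintegral_swap (μ := μ) (ν := μ) (f := F) hmeas.aemeasurable
  rw [hswap]
  have key : ∀ x : Fin n → ℝ, ε ≤ ∫⁻ y, F y x ∂μ := by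
    intro x
    apply hfar
    refine ⟨S, hS, ?_⟩
    intro y z h
    simp only
    congr 1
    funext i
    by_cases hi : i ∈ S
    · have hiT : i ∉ T := by simp [hT, hi]
      rw [if_neg hiT, if_neg hiT]
      exact h i hi
    · have hiT : i ∈ T := by simp [hT, hi]
      rw [if_pos hiT, if_pos hiT]
  calc ε = ∫⁻ _, ε ∂μ := by simp
    _ ≤ ∫⁻ x, ∫⁻ y, F y x ∂μ ∂μ := lintegral_mono fun x => key x
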